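/- Consider the hard instance graph G with stream π and maximal matching M, and let M' ⊆ M be an arbitrary (fixed) subset. Let S_L be the output of Greedy_d on the substream of π consisting of the edges of E_L between A(M') and B_out (with degree bound 1 on A(M') and degree bound d on B_out). Then: (i) for all indices i < j such that both a_in^i and a_in^j are endpoints of edges of M', if a_in^i is an endpoint of an edge of S_L then so is a_in^j; and (ii) for all indices j < i, if deg_{S_L}(b_out^i) ≥ 1 then deg_{S_L}(b_out^j) = d. -/

import Mathlib

open MeasureTheory

variable {α β : Type*} [DecidableEq α] [DecidableEq β]

def IsMatching (M : Finset (α × β)) : Prop :=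
  ∀ e ∈ M, ∀ f ∈ M, e ≠ f → e.1 ≠ f.1 ∧ e.2 ≠ f.2

instance (M : Finset (α × β)) : Decidable (IsMatching M) := by
  unfold IsMatching; exact inferInstance

def matchingNumber (E : Finset (α × β)) : ℕ :=
  (E.powerset.filter fun M => IsMatching M).sup Finset.card

def degA (S : Finset (α × β)) (a : α) : ℕ := (S.filter fun e => e.1 = a).card

def degB (S : Finset (α × β)) (b : β) : ℕ := (S.filter fun e => e.2 = b).card

def greedyStep (d : ℕ) (S : Finset (α × β)) (e : α × β) : Finset (α × β) :=
  if degA S e.1 = 0 ∧ degB S e.2 < d then insert e S else S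

def greedyD (d : ℕ) (π : List (α × β)) : Finset (α × β) :=
  π.foldl (greedyStep d) ∅

/-- Vertices of the hard instance: `Sum.inl i` is the "in" vertex of index `i`
and `Sum.inr i` is the "out" vertex of index `i` (on each side). -/
abbrev HV (N : ℕ) := Fin N ⊕ Fin N

/-- The perfect matching `M = {a_in^i b_in^i}` of the hard instance. -/
def hardM (N : ℕ) : List (HV N × HV N) :=
  (List.finRange N).map fun i => (Sum.inl i, Sum.inl i)

/-- The edges `E_L = {a_in^i b_out^j : i ≥ j}`, streamed with `i` decreasing and,
for fixed `i`, `j` increasing. -/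
def hardEL (N : ℕ) : List (HV N × HV N) :=
  ((List.finRange N).reverse).flatMap fun i =>
    ((List.finRange N).filter fun j => decide (j ≤ i)).map fun j =>
      (Sum.inl i, Sum.inr j)

/-- The edges `E_R = {a_out^i b_in^j : i ≥ j}`, streamed analogously. -/
def hardER (N : ℕ) : List (HV N × HV N) :=
  ((List.finRange N).reverse).flatMap fun i =>
    ((List.finRange N).filter fun j => decide (j ≤ i)).map fun j =>
      (Sum.inr i, Sum.inl j)

/-- The stream `π` of the hard instance: first `M`, then `E_L`, then `E_R`. -/
def hardStream (N : ℕ) : List (HV N × HV N) := hardM N ++ hardEL N ++ hardER N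

namespace HardAux

variable {α β : Type*} [DecidableEq α] [DecidableEq β] {d : ℕ}

lemma degA_eq_zero_iff {S : Finset (α × β)} {a : α} :
    degA S a = 0 ↔ ∀ e ∈ S, e.1 ≠ a := by
  simp [degA, Finset.card_eq_zero, Finset.filter_eq_empty_iff]

lemma mem_image_fst_iff {S : Finset (α × β)} {a : α} :
    a ∈ S.image Prod.fst ↔ degA S a ≠ 0 := by
  rw [Ne, degA_eq_zero_iff]
  constructor
  · rintro h hall
    obtain ⟨e, he, rfl⟩ := Finset.mem_image.1 h
    exact hall e he rfl
  · intro h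
    push_neg at h
    obtain ⟨e, he, hea⟩ := h
    exact Finset.mem_image.2 ⟨e, he, hea⟩

lemma notMem_of_degA_zero {S : Finset (α × β)} {e : α × β} (h : degA S e.1 = 0) : e ∉ S :=
  fun he => (degA_eq_zero_iff.1 h e he) rfl

lemma subset_greedyStep (d : ℕ) (S : Finset (α × β)) (e : α × β) : S ⊆ greedyStep d S e := by
  unfold greedyStep; split
  · exact Finset.subset_insert _ _
  · exact subset_rfl

lemma subset_foldl (d : ℕ) : ∀ (l : List (α × β)) (S : Finset (α × β)),
    S ⊆ l.foldl (greedyStep d) S := by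
  intro l
  induction l with
  | nil => intro S; simp
  | cons e l ih => intro S; exact (subset_greedyStep d S e).trans (ih _)

lemma degA_mono {S S' : Finset (α × β)} (h : S ⊆ S') (a : α) : degA S a ≤ degA S' a :=
  Finset.card_le_card (Finset.filter_subset_filter _ h)

lemma degB_mono {S S' : Finset (α × β)} (h : S ⊆ S') (b : β) : degB S b ≤ degB S' b :=
  Finset.card_le_card (Finset.filter_subset_filter _ h)

lemma degB_insert_self {S : Finset (α × β)} {e : α × β} (h : e ∉ S) :
    degB (insert e S) e.2 = degB S e.2 + 1 := by
  unfold degB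
  rw [Finset.filter_insert, if_pos rfl,
    Finset.card_insert_of_notMem (fun hc => h (Finset.mem_filter.1 hc).1)]

lemma degB_insert_ne {S : Finset (α × β)} {e : α × β} {b : β} (h : e.2 ≠ b) :
    degB (insert e S) b = degB S b := by
  unfold degB
  rw [Finset.filter_insert, if_neg h]

lemma degA_insert_ne {S : Finset (α × β)} {e : α × β} {a : α} (h : e.1 ≠ a) :
    degA (insert e S) a = degA S a := by
  unfold degA
  rw [Finset.filter_insert, if_neg h]

lemma greedyStep_eq_insert {S : Finset (α × β)} {e : α × β}
    (h1 : degA S e.1 = 0) (h2 : degB S e.2 < d) : greedyStep d S e = insert e S := by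
  unfold greedyStep; rw [if_pos ⟨h1, h2⟩]

lemma greedyStep_eq_self {S : Finset (α × β)} {e : α × β}
    (h : ¬(degA S e.1 = 0 ∧ degB S e.2 < d)) : greedyStep d S e = S := by
  unfold greedyStep; rw [if_neg h]

lemma degB_step_le {S : Finset (α × β)} {e : α × β} (hS : ∀ b, degB S b ≤ d) :
    ∀ b, degB (greedyStep d S e) b ≤ d := by
  intro b
  by_cases hc : degA S e.1 = 0 ∧ degB S e.2 < d
  · rw [greedyStep_eq_insert hc.1 hc.2]
    by_cases hb : e.2 = b
    · subst hb; rw [degB_insert_self (notMem_of_degA_zero hc.1)]; exact hc.2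
    · rw [degB_insert_ne hb]; exact hS b
  · rw [greedyStep_eq_self hc]; exact hS b

lemma degB_foldl_le (d : ℕ) : ∀ (l : List (α × β)) (S : Finset (α × β)),
    (∀ b, degB S b ≤ d) → ∀ b, degB (l.foldl (greedyStep d) S) b ≤ d := by
  intro l
  induction l with
  | nil => intro S hS; simpa using hS
  | cons e l ih => intro S hS; exact ih _ (degB_step_le hS)

lemma degB_foldl_eq (d : ℕ) (l : List (α × β)) (S : Finset (α × β))
    (hS : ∀ b, degB S b ≤ d) {b : β} (hb : degB S b = d) :
    degB (l.foldl (greedyStep d) S) b = d :=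
  le_antisymm (degB_foldl_le d l S hS b) (hb ▸ degB_mono (subset_foldl d l S) b)

lemma degA_foldl_of_sat {a : α} : ∀ (l : List (α × β)) (S : Finset (α × β)),
    (∀ b, degB S b ≤ d) → (∀ e ∈ l, e.1 = a → degB S e.2 = d) →
    degA (l.foldl (greedyStep d) S) a = degA S a := by
  intro l
  induction l with
  | nil => intro S _ _; simp
  | cons e l ih =>
    intro S hS h
    rw [List.foldl_cons]
    by_cases hc : degA S e.1 = 0 ∧ degB S e.2 < d
    · have he1 : e.1 ≠ a := by
        intro hea
        have hd := h e List.mem_cons_self hea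
        omega
      rw [greedyStep_eq_insert hc.1 hc.2]
      have hnot := notMem_of_degA_zero hc.1
      have hS' : ∀ b, degB (insert e S) b ≤ d := by
        intro b
        by_cases hb : e.2 = b
        · subst hb; rw [degB_insert_self hnot]; exact hc.2
        · rw [degB_insert_ne hb]; exact hS b
      have h' : ∀ e' ∈ l, e'.1 = a → degB (insert e S) e'.2 = d := by
        intro e' he' ha'
        exact le_antisymm (hS' _)
          ((h e' (List.mem_cons_of_mem e he') ha') ▸ degB_mono (Finset.subset_insert _ _) _)
      rw [ih _ hS' h', degA_insert_ne he1]
    · rw [greedyStep_eq_self hc]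
      exact ih _ hS (fun e' he' => h e' (List.mem_cons_of_mem e he'))

lemma foldl_of_matched {a : α} : ∀ (l : List (α × β)) (S : Finset (α × β)),
    (∀ e ∈ l, e.1 = a) → degA S a ≠ 0 → l.foldl (greedyStep d) S = S := by
  intro l
  induction l with
  | nil => intro S _ _; rfl
  | cons e l ih =>
    intro S h ha
    rw [List.foldl_cons, greedyStep_eq_self ?_]
    · exact ih S (fun e' he' => h e' (List.mem_cons_of_mem e he')) ha
    · intro hc
      exact ha ((h e List.mem_cons_self) ▸ hc.1)

/-! ### The hard instance -/

variable {N : ℕ}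

def blkF (T : Finset (HV N)) (i : Fin N) : List (HV N × HV N) :=
  if Sum.inl i ∈ T then
    (((List.finRange N).filter fun j => decide (j ≤ i)).map fun j => (Sum.inl i, Sum.inr j))
  else []

def streamOf (T : Finset (HV N)) (l : List (Fin N)) : List (HV N × HV N) :=
  l.flatMap (blkF T)

def SatB (d : ℕ) (S : Finset (HV N × HV N)) : Prop :=
  ∀ j1 j2 : Fin N, j1 < j2 → 1 ≤ degB S (Sum.inr j2) → degB S (Sum.inr j1) = d

lemma streamOf_cons (T : Finset (HV N)) (i : Fin N) (l : List (Fin N)) :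
    streamOf T (i :: l) = blkF T i ++ streamOf T l := by
  simp [streamOf]

lemma mem_streamOf {T : Finset (HV N)} {l : List (Fin N)} {e : HV N × HV N}
    (he : e ∈ streamOf T l) :
    ∃ i ∈ l, ∃ j : Fin N, j ≤ i ∧ e = (Sum.inl i, Sum.inr j) := by
  simp only [streamOf, List.mem_flatMap] at he
  obtain ⟨i, hi, he⟩ := he
  refine ⟨i, hi, ?_⟩
  unfold blkF at he
  split at he
  · simp only [List.mem_map, List.mem_filter, List.mem_finRange, true_and,
      decide_eq_true_eq] at he
    obtain ⟨j, hj, rfl⟩ := he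
    exact ⟨j, hj, rfl⟩
  · simp at he

lemma block_fold (d : ℕ) (i : Fin N) (js : List (Fin N)) :
    ∀ (S : Finset (HV N × HV N)),
      js.Pairwise (· < ·) →
      degA S (Sum.inl i) = 0 →
      (∀ b, degB S b ≤ d) →
      SatB d S →
      (∀ j'' j : Fin N, j ∈ js → j'' < j → j'' ∈ js ∨ degB S (Sum.inr j'') = d) →
      ∀ S1, S1 = (js.map fun j => ((Sum.inl i : HV N), (Sum.inr j : HV N))).foldl (greedyStep d) S →
      (∀ b, degB S1 b ≤ d) ∧ SatB d S1 ∧ S ⊆ S1 ∧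
      (∀ e ∈ S1, e ∈ S ∨ e.1 = Sum.inl i) ∧
      (degA S1 (Sum.inl i) = 0 → ∀ j ∈ js, degB S1 (Sum.inr j) = d) := by
  induction js with
  | nil =>
    intro S _ _ hS hsat _ S1 hS1
    subst hS1
    exact ⟨hS, hsat, subset_rfl, fun e he => Or.inl he,
      fun _ j hj => absurd hj List.not_mem_nil⟩
  | cons j rest ih =>
    intro S hpw ha hS hsat hbelow S1 hS1
    have hjlt : ∀ j' ∈ rest, j < j' := fun j' hj' => (List.pairwise_cons.1 hpw).1 j' hj'
    have hpw' := (List.pairwise_cons.1 hpw).2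
    rw [List.map_cons, List.foldl_cons] at hS1
    by_cases hlt : degB S (Sum.inr j) < d
    · -- the edge (a_i, b_j) is inserted
      rw [greedyStep_eq_insert ha hlt] at hS1
      set e : HV N × HV N := (Sum.inl i, Sum.inr j) with hedef
      have hnot : e ∉ S := notMem_of_degA_zero ha
      have hdA : degA (insert e S) (Sum.inl i) ≠ 0 := by
        intro h0
        exact degA_eq_zero_iff.1 h0 e (Finset.mem_insert_self e S) rfl
      have hfold : S1 = insert e S := by
        rw [hS1]
        refine foldl_of_matched _ _ ?_ hdA
        intro e' he'
        simp only [List.mem_map] at he'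
        obtain ⟨j', _, rfl⟩ := he'
        rfl
      subst hfold
      have hsatj : ∀ j'' : Fin N, j'' < j → degB S (Sum.inr j'') = d := by
        intro j'' hj''
        rcases hbelow j'' j List.mem_cons_self hj'' with h | h
        · rcases List.mem_cons.1 h with rfl | h
          · exact absurd hj'' (lt_irrefl _)
          · exact absurd hj'' (lt_asymm (hjlt _ h))
        · exact h
      have hS' : ∀ b, degB (insert e S) b ≤ d := by
        intro b
        by_cases hb : e.2 = b
        · subst hb; rw [degB_insert_self hnot]; exact hlt
        · rw [degB_insert_ne hb]; exact hS b
      have hkey : ∀ j0 : Fin N, j0 < j → degB (insert e S) (Sum.inr j0) = d := by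
        intro j0 h0
        rw [degB_insert_ne (fun hc => (ne_of_lt h0).symm (Sum.inr_injective hc))]
        exact hsatj j0 h0
      refine ⟨hS', ?_, Finset.subset_insert e S, ?_, fun h0 => absurd h0 hdA⟩
      · intro j1 j2 h12 hpos
        by_cases hj2 : j2 = j
        · subst hj2; exact hkey j1 h12
        · have hpos' : 1 ≤ degB S (Sum.inr j2) := by
            rwa [degB_insert_ne (fun hc => hj2 (Sum.inr_injective hc).symm)] at hpos
          have hd := hsat j1 j2 h12 hpos'
          by_cases hj1 : j1 = j
          · subst hj1; omega
          · rw [degB_insert_ne (fun hc => hj1 (Sum.inr_injective hc).symm)]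
            exact hd
      · intro e' he'
        rcases Finset.mem_insert.1 he' with rfl | h
        · exact Or.inr rfl
        · exact Or.inl h
    · -- the edge (a_i, b_j) is rejected, so degB S (b_j) = d
      have hdeq : degB S (Sum.inr j) = d := le_antisymm (hS _) (not_lt.1 hlt)
      rw [greedyStep_eq_self (fun hc => hlt hc.2)] at hS1
      have hbelow' : ∀ j'' j2 : Fin N, j2 ∈ rest → j'' < j2 →
          j'' ∈ rest ∨ degB S (Sum.inr j'') = d := by
        intro j'' j2 hj2 hlt2
        rcases hbelow j'' j2 (List.mem_cons_of_mem j hj2) hlt2 with h | h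
        · rcases List.mem_cons.1 h with rfl | h
          · exact Or.inr hdeq
          · exact Or.inl h
        · exact Or.inr h
      obtain ⟨c1, c2, c3, c4, c5⟩ := ih S hpw' ha hS hsat hbelow' S1 hS1
      refine ⟨c1, c2, c3, c4, ?_⟩
      intro h0 j' hj'
      rcases List.mem_cons.1 hj' with rfl | hj'
      · rw [hS1]; exact degB_foldl_eq d _ S hS hdeq
      · exact c5 h0 j' hj'

lemma main_fold (d : ℕ) (T : Finset (HV N)) (l : List (Fin N)) :
    ∀ (S : Finset (HV N × HV N)),
      l.Pairwise (· > ·) →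
      (∀ i ∈ l, degA S (Sum.inl i) = 0) →
      (∀ b, degB S b ≤ d) →
      SatB d S →
      ∀ S', S' = (streamOf T l).foldl (greedyStep d) S →
      (∀ b, degB S' b ≤ d) ∧ SatB d S' ∧ S ⊆ S' ∧
      (∀ e ∈ S', e ∈ S ∨ ∃ i ∈ l, e.1 = Sum.inl i) ∧
      (∀ i ∈ l, Sum.inl i ∈ T → degA S' (Sum.inl i) = 0 →
        (∀ j : Fin N, j ≤ i → degB S' (Sum.inr j) = d) ∧
        (∀ i' ∈ l, i' < i → degA S' (Sum.inl i') = 0)) := by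
  induction l with
  | nil =>
    intro S _ _ hS hsat S' hS'
    subst hS'
    exact ⟨hS, hsat, subset_rfl, fun e he => Or.inl he,
      fun i hi => absurd hi List.not_mem_nil⟩
  | cons i rest ih =>
    intro S hpw hA hS hsat S' hS'
    have hilt : ∀ i' ∈ rest, i' < i := fun i' h => (List.pairwise_cons.1 hpw).1 i' h
    have hpw' := (List.pairwise_cons.1 hpw).2
    rw [streamOf_cons, List.foldl_append] at hS'
    by_cases hiT : Sum.inl i ∈ T
    · set js := (List.finRange N).filter (fun j => decide (j ≤ i)) with hjs
      have hjs_mem : ∀ j : Fin N, j ∈ js ↔ j ≤ i := by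
        intro j; simp [hjs]
      have hjs_pw : js.Pairwise (· < ·) := (List.pairwise_lt_finRange N).filter _
      have hblk : blkF T i = js.map fun j => ((Sum.inl i : HV N), (Sum.inr j : HV N)) := by
        rw [blkF, if_pos hiT]
      rw [hblk] at hS'
      set S1 := (js.map fun j => ((Sum.inl i : HV N), (Sum.inr j : HV N))).foldl (greedyStep d) S
        with hS1def
      obtain ⟨c1, c2, c3, c4, c5⟩ := block_fold d i js S hjs_pw
        (hA i List.mem_cons_self) hS hsat
        (fun j'' j hj hlt2 =>
          Or.inl ((hjs_mem j'').2 (le_of_lt (lt_of_lt_of_le hlt2 ((hjs_mem j).1 hj)))))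
        S1 hS1def
      have hA1 : ∀ i' ∈ rest, degA S1 (Sum.inl i') = 0 := by
        intro i' hi'
        rw [degA_eq_zero_iff]
        intro e heS1
        rcases c4 e heS1 with hin | hfst
        · exact degA_eq_zero_iff.1 (hA i' (List.mem_cons_of_mem i hi')) e hin
        · rw [hfst]
          simp only [ne_eq, Sum.inl.injEq]
          exact (hilt i' hi').ne'
      obtain ⟨g1, g2, g3, g4, g5⟩ := ih S1 hpw' hA1 c1 c2 S' hS'
      refine ⟨g1, g2, c3.trans g3, ?_, ?_⟩
      · intro e he
        rcases g4 e he with h1 | ⟨i', hi', hf⟩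
        · rcases c4 e h1 with h2 | hf
          · exact Or.inl h2
          · exact Or.inr ⟨i, List.mem_cons_self, hf⟩
        · exact Or.inr ⟨i', List.mem_cons_of_mem i hi', hf⟩
      · intro i0 hi0 hi0T hi0A
        rcases List.mem_cons.1 hi0 with rfl | hi0r
        · -- i0 = i
          have hA1i : degA S1 (Sum.inl i0) = 0 :=
            Nat.le_zero.1 (hi0A ▸ degA_mono g3 (Sum.inl i0))
          have hsat1 : ∀ j : Fin N, j ≤ i0 → degB S1 (Sum.inr j) = d :=
            fun j hj => c5 hA1i j ((hjs_mem j).2 hj)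
          constructor
          · intro j hj
            rw [hS']
            exact degB_foldl_eq d _ _ c1 (hsat1 j hj)
          · intro i' hi' hlt
            have hi'r : i' ∈ rest := by
              rcases List.mem_cons.1 hi' with rfl | h
              · exact absurd hlt (lt_irrefl _)
              · exact h
            rw [hS', degA_foldl_of_sat _ _ c1 ?_]
            · exact hA1 i' hi'r
            · intro e he hef
              obtain ⟨i'', hi'', j, hj, rfl⟩ := mem_streamOf he
              have hii : i'' = i' := Sum.inl_injective hef
              subst hii
              exact hsat1 j (le_of_lt (lt_of_le_of_lt hj hlt))
        · -- i0 ∈ rest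
          obtain ⟨p1, p2⟩ := g5 i0 hi0r hi0T hi0A
          refine ⟨p1, ?_⟩
          intro i' hi' hlt
          rcases List.mem_cons.1 hi' with rfl | h
          · exact absurd hlt (lt_asymm (hilt i0 hi0r))
          · exact p2 i' h hlt
    · have hblk : blkF T i = [] := by rw [blkF, if_neg hiT]
      rw [hblk, List.foldl_nil] at hS'
      obtain ⟨g1, g2, g3, g4, g5⟩ := ih S hpw'
        (fun i' h => hA i' (List.mem_cons_of_mem i h)) hS hsat S' hS'
      refine ⟨g1, g2, g3, ?_, ?_⟩
      · intro e he
        rcases g4 e he with h | ⟨i', hi', hf⟩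
        · exact Or.inl h
        · exact Or.inr ⟨i', List.mem_cons_of_mem i hi', hf⟩
      · intro i0 hi0 hi0T hi0A
        rcases List.mem_cons.1 hi0 with rfl | hi0r
        · exact absurd hi0T hiT
        · obtain ⟨p1, p2⟩ := g5 i0 hi0r hi0T hi0A
          refine ⟨p1, ?_⟩
          intro i' hi' hlt
          rcases List.mem_cons.1 hi' with rfl | h
          · exact absurd hlt (lt_asymm (hilt i0 hi0r))
          · exact p2 i' h hlt

lemma filter_flatMap {γ δ : Type*} (l : List γ) (f : γ → List δ) (p : δ → Bool) :
    (l.flatMap f).filter p = l.flatMap fun x => (f x).filter p := by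
  induction l with
  | nil => rfl
  | cons x l ih => simp [List.flatMap_cons, List.filter_append, ih]

lemma stream_eq (N : ℕ) (T : Finset (HV N)) :
    ((hardStream N).filter fun e => decide (e.1 ∈ T) && e.2.isRight) =
      streamOf T (List.finRange N).reverse := by
  unfold hardStream
  rw [List.filter_append, List.filter_append]
  have hM : (hardM N).filter (fun e => decide (e.1 ∈ T) && e.2.isRight) = [] := by
    rw [List.filter_eq_nil_iff]
    intro e he
    simp only [hardM, List.mem_map] at he
    obtain ⟨i, _, rfl⟩ := he
    simp
  have hR : (hardER N).filter (fun e => decide (e.1 ∈ T) && e.2.isRight) = [] := by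
    rw [List.filter_eq_nil_iff]
    intro e he
    simp only [hardER, List.mem_flatMap, List.mem_map] at he
    obtain ⟨i, _, j, _, rfl⟩ := he
    simp
  rw [hM, hR, List.nil_append, List.append_nil]
  unfold hardEL streamOf
  rw [filter_flatMap]
  congr 1
  funext i
  rw [List.filter_map]
  by_cases hT : Sum.inl i ∈ T
  · simp [blkF, hT, Function.comp]
  · simp [blkF, hT, Function.comp]

end HardAux


/-- The key structural claim in the proof of Theorem 4.5: for any fixed subset
`M' ⊆ M`, letting `S_L` be the output of `Greedy_d` on the substream of `π`
consisting of the `E_L`-edges between `A(M')` and `B_out`,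
(i) the `A(M')`-vertices are matched in `S_L` from the largest index downwards:
if `i < j`, both `a_in^i` and `a_in^j` are `M'`-endpoints, and `a_in^i` is
matched in `S_L`, then so is `a_in^j`; and
(ii) the `B_out`-vertices are saturated from the smallest index upwards: if
`j < i` and `deg_{S_L}(b_out^i) ≥ 1` then `deg_{S_L}(b_out^j) = d`. -/
theorem hard_instance_greedy_monotone (N d : ℕ) (hd : 1 ≤ d)
    (M' : Finset (HV N × HV N)) (hM' : M' ⊆ (hardM N).toFinset) :
    ∀ SL : Finset (HV N × HV N),
      SL = greedyD d ((hardStream N).filter fun e =>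
        decide (e.1 ∈ M'.image Prod.fst) && e.2.isRight) →
      ((∀ i j : Fin N, i < j →
          Sum.inl i ∈ M'.image Prod.fst → Sum.inl j ∈ M'.image Prod.fst →
          Sum.inl i ∈ SL.image Prod.fst → Sum.inl j ∈ SL.image Prod.fst) ∧
       (∀ j i : Fin N, j < i →
          1 ≤ degB SL (Sum.inr i) → degB SL (Sum.inr j) = d)) := by
  intro SL hSL
  have hstream := HardAux.stream_eq N (M'.image Prod.fst)
  rw [hstream] at hSL
  have hpw : ((List.finRange N).reverse).Pairwise (· > ·) := by
    rw [List.pairwise_reverse]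
    exact List.pairwise_lt_finRange N
  obtain ⟨c1, c2, c3, c4, c5⟩ := HardAux.main_fold d (M'.image Prod.fst)
    ((List.finRange N).reverse) ∅ hpw
    (by intro i _; simp [degA]) (by intro b; simp [degB]) (by intro j1 j2 _ h; simp [degB] at h)
    SL (by rw [hSL]; rfl)
  constructor
  · intro i j hij hiT hjT hiS
    by_contra hjS
    have hj0 : degA SL (Sum.inl j) = 0 := by
      by_contra h0
      exact hjS (HardAux.mem_image_fst_iff.2 h0)
    have h := (c5 j (by simp) hjT hj0).2 i (by simp) hij
    exact (HardAux.mem_image_fst_iff.1 hiS) h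
  · intro j i hji h1
    exact c2 j i hji h1
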